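/- Let q, h, a : ℝ → E³ together with a differentiable conical curvature κ : ℝ → ℝ be a Frenet frame of a ruled surface, and assume κ(s) ≠ 0 for all s. If there exist a fixed vector u ∈ E³ with u ≠ 0 and a real constant c ≠ 0 such that ⟪h(s), u⟫ = c for all s (i.e., the surface is h-slant with axis u), then the function s ↦ κ'(s) / (1 + κ(s)²)^{3/2} is constant on ℝ. -/

import Mathlib

open RealInnerProductSpace Matrix

noncomputable section

abbrev E3 := EuclideanSpace ℝ (Fin 3)

/-- A Frenet frame of a ruled surface: `q`, `h`, `a` are orthonormal at every
parameter and satisfy the Frenet equations with conical curvature `κ`. -/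
def IsFrenetFrame (q h a : ℝ → E3) (κ : ℝ → ℝ) : Prop :=
  (∀ s, ⟪q s, q s⟫ = 1 ∧ ⟪h s, h s⟫ = 1 ∧ ⟪a s, a s⟫ = 1 ∧
        ⟪q s, h s⟫ = 0 ∧ ⟪q s, a s⟫ = 0 ∧ ⟪h s, a s⟫ = 0) ∧
  (∀ s, HasDerivAt q (h s) s) ∧
  (∀ s, HasDerivAt h (-q s + κ s • a s) s) ∧
  (∀ s, HasDerivAt a (-(κ s • h s)) s)

/-- The Darboux vector of the frame. -/
def darboux (q a : ℝ → E3) (κ : ℝ → ℝ) : ℝ → E3 := fun s => κ s • q s + a s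

theorem h_slant_implies_const
    (q h a : ℝ → E3) (κ : ℝ → ℝ)
    (hframe : IsFrenetFrame q h a κ)
    (hκdiff : Differentiable ℝ κ)
    (hκne : ∀ s, κ s ≠ 0)
    (u : E3) (hu : u ≠ 0) (c : ℝ) (hc : c ≠ 0)
    (hslant : ∀ s, ⟪h s, u⟫ = c) :
    ∃ d : ℝ, ∀ s, deriv κ s / (1 + κ s ^ 2) ^ ((3 : ℝ) / 2) = d := by
  obtain ⟨horth, hq, hh, ha⟩ := hframe
  set f : ℝ → ℝ := fun s => ⟪q s, u⟫ with hfdef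
  set g : ℝ → ℝ := fun s => ⟪a s, u⟫ with hgdef
  have hpos : ∀ s, (0 : ℝ) < 1 + κ s ^ 2 := fun s => by positivity
  -- derivative of f is c
  have hf' : ∀ s, HasDerivAt f c s := by
    intro s
    have := (hq s).inner ℝ (hasDerivAt_const s u)
    simpa [hslant s] using this
  -- derivative of g
  have hg' : ∀ s, HasDerivAt g (-(κ s * c)) s := by
    intro s
    have := (ha s).inner ℝ (hasDerivAt_const s u)
    simpa [inner_smul_left, hslant s] using this
  -- f = κ g
  have hfg : ∀ s, f s = κ s * g s := by
    intro s
    have h1 := (hh s).inner ℝ (hasDerivAt_const s u)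
    have h2 : HasDerivAt (fun t => ⟪h t, u⟫) 0 s := by
      have : (fun t => ⟪h t, u⟫) = fun _ => c := funext hslant
      rw [this]; exact hasDerivAt_const s c
    have h3 := h1.unique h2
    simp only [inner_zero_right, add_zero, inner_add_left, inner_neg_left,
      inner_smul_left, RCLike.star_def, starRingEnd_apply, star_trivial] at h3
    have h4 : -f s + κ s * g s = 0 := by simpa using h3
    linarith
  -- κ' g = c (1 + κ²)
  have hκg : ∀ s, deriv κ s * g s = c * (1 + κ s ^ 2) := by
    intro s
    have h1 : HasDerivAt (fun t => κ t * g t)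
        (deriv κ s * g s + κ s * -(κ s * c)) s :=
      ((hκdiff s).hasDerivAt).mul (hg' s)
    have h2 : (fun t => κ t * g t) = f := by
      funext t; exact (hfg t).symm
    rw [h2] at h1
    have := h1.unique (hf' s)
    nlinarith [this]
  -- g never vanishes
  have hgne : ∀ s, g s ≠ 0 := by
    intro s hs
    have := hκg s
    rw [hs, mul_zero] at this
    exact (mul_ne_zero hc (hpos s).ne') this.symm
  -- f² + g² is constant
  have hFconst : ∀ s, f s ^ 2 + g s ^ 2 = f 0 ^ 2 + g 0 ^ 2 := by
    have hF' : ∀ s, HasDerivAt (fun t => f t ^ 2 + g t ^ 2) 0 s := by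
      intro s
      have h1 := (((hf' s).pow 2).add ((hg' s).pow 2))
      refine HasDerivAt.congr_deriv h1 ?_
      push_cast
      linear_combination (2 * c) * hfg s
    intro s
    exact is_const_of_deriv_eq_zero (fun t => (hF' t).differentiableAt)
      (fun t => (hF' t).deriv) s 0
  -- g² (1+κ²) is constant
  set K : ℝ := f 0 ^ 2 + g 0 ^ 2 with hKdef
  have hGsq : ∀ s, g s ^ 2 * (1 + κ s ^ 2) = K := by
    intro s
    have h1 := hFconst s
    have h2 := hfg s
    linear_combination h1 - (f s + κ s * g s) * h2
  set G : ℝ → ℝ := fun s => g s * Real.sqrt (1 + κ s ^ 2) with hGdef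
  have hGsq' : ∀ s, G s ^ 2 = K := by
    intro s
    simp only [hGdef, mul_pow, Real.sq_sqrt (hpos s).le]
    exact hGsq s
  have hGne : ∀ s, G s ≠ 0 := fun s =>
    mul_ne_zero (hgne s) (Real.sqrt_pos.2 (hpos s)).ne'
  have hgcont : Continuous g := by
    have : Differentiable ℝ g := fun s => (hg' s).differentiableAt
    exact this.continuous
  have hGcont : Continuous G := by
    apply hgcont.mul
    exact (Real.continuous_sqrt.comp (by have := hκdiff.continuous; fun_prop))
  -- G is constant
  have hGconst : ∀ s, G s = G 0 := by
    intro s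
    have hsq : G s ^ 2 = G 0 ^ 2 := by rw [hGsq', hGsq']
    rcases sq_eq_sq_iff_eq_or_eq_neg.1 hsq with h | h
    · exact h
    · exfalso
      rcases lt_trichotomy (G 0) 0 with h0 | h0 | h0
      · have hs0 : 0 < G s := by rw [h]; linarith
        obtain ⟨t, ht⟩ := intermediate_value_univ 0 s hGcont
          (Set.mem_Icc.2 ⟨h0.le, hs0.le⟩)
        exact hGne t ht
      · exact hGne 0 h0
      · have hs0 : G s < 0 := by rw [h]; linarith
        obtain ⟨t, ht⟩ := intermediate_value_univ s 0 hGcont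
          (Set.mem_Icc.2 ⟨hs0.le, h0.le⟩)
        exact hGne t ht
  refine ⟨c / G 0, fun s => ?_⟩
  have hrpow : (1 + κ s ^ 2) ^ ((3 : ℝ) / 2)
      = (1 + κ s ^ 2) * Real.sqrt (1 + κ s ^ 2) := by
    rw [show ((3 : ℝ) / 2) = 1 + 1 / 2 by norm_num, Real.rpow_add (hpos s),
      Real.rpow_one, ← Real.sqrt_eq_rpow]
  rw [hrpow, ← hGconst s]
  have hsne : Real.sqrt (1 + κ s ^ 2) ≠ 0 := by
    rw [Real.sqrt_ne_zero' ]; exact hpos s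
  rw [div_eq_div_iff (mul_ne_zero (hpos s).ne' hsne) (hGne s)]
  simp only [hGdef]
  have := hκg s
  ring_nf
  nlinarith [this, Real.sq_sqrt (hpos s).le, Real.sqrt_nonneg (1 + κ s ^ 2)]
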